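/- Let q be a prime power, m ≥ 1, and 2 ≤ t ≤ m. Then the ideal I_{m,t} = ⟨{σ_t, ..., σ_m} ∪ E_q[Y]⟩ of F_q[y_1,...,y_m] equals the ideal generated by E_q[Y] ∪ M_{m,t}. -/

import Mathlib

open MvPolynomial

def fieldEqs (F : Type) [Field F] [Fintype F] (m : ℕ) : Set (MvPolynomial (Fin m) F) :=
  {p | ∃ i : Fin m, p = X i ^ Fintype.card F - X i}

def sqfMonomials (F : Type) [Field F] [Fintype F] (m t : ℕ) : Set (MvPolynomial (Fin m) F) :=
  {p | ∃ s : Finset (Fin m), s.card = t ∧ p = ∏ i ∈ s, X i}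

/-- The set of elementary symmetric polynomials `σ_t, ..., σ_m`. -/
def esymmRange (F : Type) [Field F] [Fintype F] (m t : ℕ) : Set (MvPolynomial (Fin m) F) :=
  {p | ∃ j : ℕ, t ≤ j ∧ j ≤ m ∧ p = esymm (Fin m) F j}

namespace Stmt1Aux

open Finset
open scoped Classical

variable {F : Type} [Field F] [Fintype F] {m : ℕ}

/-- Reduction of an exponent modulo the relation `X^q = X`. -/
def qred (q n : ℕ) : ℕ := if n = 0 then 0 else (n - 1) % (q - 1) + 1

lemma qred_zero (q : ℕ) : qred q 0 = 0 := by simp [qred]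

lemma qred_le {q : ℕ} (hq : 2 ≤ q) (n : ℕ) : qred q n ≤ q - 1 := by
  unfold qred
  split
  · omega
  · have := Nat.mod_lt (n - 1) (y := q - 1) (by omega)
    omega

lemma pow_qred_mem (i : Fin m) (n : ℕ) :
    (X i ^ n - X i ^ qred (Fintype.card F) n : MvPolynomial (Fin m) F) ∈
      Ideal.span (fieldEqs F m) := by
  set q := Fintype.card F with hqdef
  have hq : 2 ≤ q := Fintype.one_lt_card
  induction n using Nat.strong_induction_on with
  | _ n ih =>
    rcases lt_or_ge n q with hn | hn
    · have hr : qred q n = n := by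
        unfold qred
        rcases Nat.eq_zero_or_pos n with h | h
        · simp [h]
        · rw [if_neg (by omega), Nat.mod_eq_of_lt (by omega)]
          omega
      rw [hr, sub_self]
      exact Ideal.zero_mem _
    · have h1 : (X i ^ n - X i ^ (n - (q - 1)) : MvPolynomial (Fin m) F) ∈
          Ideal.span (fieldEqs F m) := by
        have e1 : (X i : MvPolynomial (Fin m) F) ^ (n - q) * X i ^ q = X i ^ n := by
          rw [← pow_add]; congr 1; omega
        have e2 : (X i : MvPolynomial (Fin m) F) ^ (n - q) * X i = X i ^ (n - (q - 1)) := by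
          rw [← pow_succ]; congr 1; omega
        have e3 : (X i ^ n - X i ^ (n - (q - 1)) : MvPolynomial (Fin m) F)
            = X i ^ (n - q) * (X i ^ q - X i) := by
          rw [mul_sub, e1, e2]
        rw [e3]
        exact Ideal.mul_mem_left _ _ (Ideal.subset_span ⟨i, rfl⟩)
      have h2 : qred q n = qred q (n - (q - 1)) := by
        unfold qred
        rw [if_neg (by omega), if_neg (by omega)]
        have hmod : (n - 1) % (q - 1) = (n - 1 - (q - 1)) % (q - 1) :=
          Nat.mod_eq_sub_mod (by omega)
        rw [hmod]
        congr 2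
        omega
      have h3 := ih (n - (q - 1)) (by omega)
      rw [h2]
      have h4 := Ideal.add_mem _ h1 h3
      rwa [sub_add_sub_cancel] at h4

lemma exists_reduced (p : MvPolynomial (Fin m) F) :
    ∃ r ∈ restrictDegree (Fin m) F (Fintype.card F - 1),
      p - r ∈ Ideal.span (fieldEqs F m) := by
  classical
  have hq : 2 ≤ Fintype.card F := Fintype.one_lt_card
  induction p using MvPolynomial.induction_on' with
  | monomial d c =>
    refine ⟨monomial (d.mapRange (qred (Fintype.card F)) (qred_zero _)) c, ?_, ?_⟩
    · rw [mem_restrictDegree]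
      intro s hs i
      rw [support_monomial] at hs
      split at hs
      · simp at hs
      · rw [Finset.mem_singleton] at hs
        subst hs
        rw [Finsupp.mapRange_apply]
        exact qred_le hq _
    · rw [← Ideal.Quotient.eq]
      rw [monomial_eq, monomial_eq, Finsupp.prod,
        Finsupp.prod_of_support_subset (d.mapRange (qred (Fintype.card F)) (qred_zero _))
          Finsupp.support_mapRange (fun n e => X n ^ e) (fun i _ => pow_zero _)]
      simp only [map_mul, map_prod]
      congr 1
      apply Finset.prod_congr rfl
      intro i _
      rw [Finsupp.mapRange_apply]
      exact Ideal.Quotient.eq.mpr (pow_qred_mem i (d i))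
  | add p q hp hq' =>
    obtain ⟨r1, hr1, hpr1⟩ := hp
    obtain ⟨r2, hr2, hpr2⟩ := hq'
    refine ⟨r1 + r2, Submodule.add_mem _ hr1 hr2, ?_⟩
    rw [add_sub_add_comm]
    exact Ideal.add_mem _ hpr1 hpr2

lemma mem_span_fieldEqs (p : MvPolynomial (Fin m) F) (h : ∀ a : Fin m → F, eval a p = 0) :
    p ∈ Ideal.span (fieldEqs F m) := by
  obtain ⟨r, hr, hpr⟩ := exists_reduced p
  have hspan : ∀ a : Fin m → F, eval a (p - r) = 0 := by
    intro a
    have hle : Ideal.span (fieldEqs F m) ≤ RingHom.ker (eval a) := by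
      rw [Ideal.span_le]
      rintro _ ⟨i, rfl⟩
      simp [RingHom.mem_ker, FiniteField.pow_card]
    exact hle hpr
  have hr0 : r = 0 := by
    apply eq_zero_of_eval_eq_zero (Fin m) F r _ hr
    intro v
    have h1 := hspan v
    have h2 := h v
    rw [map_sub, h2, zero_sub, neg_eq_zero] at h1
    exact h1
  rw [hr0, sub_zero] at hpr
  exact hpr

lemma eval_esymm_card_support (a : Fin m → F) :
    eval a (esymm (Fin m) F (univ.filter fun i => a i ≠ 0).card) =
      ∏ i ∈ univ.filter fun i => a i ≠ 0, a i := by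
  rw [esymm, map_sum]
  rw [Finset.sum_eq_single (univ.filter fun i => a i ≠ 0)]
  · simp
  · intro A hA hne
    rw [mem_powersetCard] at hA
    have hnsub : ¬ A ⊆ univ.filter fun i => a i ≠ 0 := fun hsub =>
      hne (Finset.eq_of_subset_of_card_le hsub (le_of_eq hA.2.symm))
    obtain ⟨i, hiA, hi⟩ := Finset.not_subset.mp hnsub
    have hai : a i = 0 := by simpa using hi
    rw [map_prod]
    apply Finset.prod_eq_zero hiA
    simp [hai]
  · intro hcontra
    exact absurd (mem_powersetCard_univ.mpr rfl) hcontra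

lemma sqf_mem_span {t : ℕ} (s : Finset (Fin m)) (hs : s.card = t) :
    (∏ i ∈ s, X i : MvPolynomial (Fin m) F) ∈
      Ideal.span (esymmRange F m t ∪ fieldEqs F m) := by
  set μ : MvPolynomial (Fin m) F := ∏ i ∈ s, X i with hμ
  set w : (Fin m → F) → ℕ := fun a => (univ.filter fun i => a i ≠ 0).card with hw
  set h : MvPolynomial (Fin m) F :=
    ∑ a : Fin m → F, (eval a μ * (eval a (esymm (Fin m) F (w a)))⁻¹) •
      (indicator a * esymm (Fin m) F (w a)) with hh
  have hmem : h ∈ Ideal.span (esymmRange F m t ∪ fieldEqs F m) := by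
    apply Ideal.sum_mem
    intro a _
    by_cases ha : eval a μ = 0
    · rw [ha]; simp
    · have hsub : s ⊆ univ.filter fun i => a i ≠ 0 := by
        intro i hi
        simp only [mem_filter, mem_univ, true_and]
        intro h0
        exact ha (by rw [hμ, map_prod]; exact Finset.prod_eq_zero hi (by simp [h0]))
      have htw : t ≤ w a := le_trans (le_of_eq hs.symm) (Finset.card_le_card hsub)
      have hwm : w a ≤ m := by
        have := Finset.card_filter_le univ (fun i : Fin m => a i ≠ 0)
        simpa using this
      have hgen : esymm (Fin m) F (w a) ∈ esymmRange F m t := ⟨w a, htw, hwm, rfl⟩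
      rw [smul_eq_C_mul]
      exact Ideal.mul_mem_left _ _
        (Ideal.mul_mem_left _ _ (Ideal.subset_span (Or.inl hgen)))
  have hvanish : ∀ b : Fin m → F, eval b (μ - h) = 0 := by
    intro b
    rw [map_sub, hh, map_sum]
    rw [Finset.sum_eq_single b]
    · by_cases hb : eval b μ = 0
      · simp [hb, smul_eq_C_mul]
      · have hne : eval b (esymm (Fin m) F (w b)) ≠ 0 := by
          rw [hw, eval_esymm_card_support, Finset.prod_ne_zero_iff]
          intro i hi
          exact (mem_filter.mp hi).2
        rw [smul_eq_C_mul]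
        simp only [map_mul, eval_C, eval_indicator_apply_eq_one, one_mul]
        field_simp
        simp
    · intro a _ hab
      rw [smul_eq_C_mul]
      simp [eval_indicator_apply_eq_zero b a (Ne.symm hab)]
    · intro hcontra
      exact absurd (Finset.mem_univ b) hcontra
  have hμh : μ - h ∈ Ideal.span (esymmRange F m t ∪ fieldEqs F m) :=
    Ideal.span_mono Set.subset_union_right (mem_span_fieldEqs (μ - h) hvanish)
  have := Ideal.add_mem _ hμh hmem
  simpa using this

lemma esymm_mem {t j : ℕ} (htj : t ≤ j) :
    esymm (Fin m) F j ∈ Ideal.span (fieldEqs F m ∪ sqfMonomials F m t) := by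
  classical
  rw [esymm]
  apply Ideal.sum_mem
  intro A hA
  rw [mem_powersetCard] at hA
  obtain ⟨B, hBA, hB⟩ := Finset.exists_subset_card_eq (le_trans htj (le_of_eq hA.2.symm))
  have hsplit : ∏ i ∈ A, (X i : MvPolynomial (Fin m) F) = (∏ i ∈ A \ B, X i) * ∏ i ∈ B, X i :=
    (Finset.prod_sdiff hBA).symm
  rw [hsplit]
  exact Ideal.mul_mem_left _ _ (Ideal.subset_span (Or.inr ⟨B, hB, rfl⟩))

end Stmt1Aux

theorem stmt1 (F : Type) [Field F] [Fintype F] (m t : ℕ) (hm : 1 ≤ m)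
    (ht1 : 2 ≤ t) (ht2 : t ≤ m) :
    Ideal.span (esymmRange F m t ∪ fieldEqs F m) =
      Ideal.span (fieldEqs F m ∪ sqfMonomials F m t) := by
  apply le_antisymm
  · rw [Ideal.span_le]
    rintro p (⟨j, hj1, hj2, rfl⟩ | hp)
    · exact Stmt1Aux.esymm_mem hj1
    · exact Ideal.subset_span (Or.inl hp)
  · rw [Ideal.span_le]
    rintro p (hp | ⟨s, hs, rfl⟩)
    · exact Ideal.subset_span (Or.inr hp)
    · exact Stmt1Aux.sqf_mem_span s hs
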